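/- Let {A₁,...,A_k} and {B₁,...,B_k} be m×n complex matrices, and suppose there is a unitary m×m matrix U with U Aᵢ Aⱼᴴ Uᴴ = Bᵢ Bⱼᴴ for all i, j. Then there exists a unitary n×n matrix V such that U Aᵢ = Bᵢ V for all i, i.e., the families are simultaneously unitarily equivalent. -/

import Mathlib

open Matrix

noncomputable section

/-- If two finite families of vectors in `ℂⁿ` have the same Gram matrix, there is a linear
isometry of `ℂⁿ` taking one to the other. -/
theorem gram_exists_isometry {n : ℕ} {P : Type*} [Fintype P]
    (x y : P → EuclideanSpace ℂ (Fin n))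
    (hxy : ∀ p q, (inner ℂ (x p) (x q) : ℂ) = inner ℂ (y p) (y q)) :
    ∃ W : EuclideanSpace ℂ (Fin n) →ₗᵢ[ℂ] EuclideanSpace ℂ (Fin n), ∀ p, W (x p) = y p := by
  classical
  set T : (P → ℂ) →ₗ[ℂ] EuclideanSpace ℂ (Fin n) := Fintype.linearCombination ℂ x with hT
  set T' : (P → ℂ) →ₗ[ℂ] EuclideanSpace ℂ (Fin n) := Fintype.linearCombination ℂ y with hT'
  have key : ∀ c d : P → ℂ, (inner ℂ (T c) (T d) : ℂ) = inner ℂ (T' c) (T' d) := by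
    intro c d
    simp only [hT, hT', Fintype.linearCombination_apply, sum_inner, inner_sum,
      inner_smul_left, inner_smul_right, hxy]
  have hnorm : ∀ c : P → ℂ, ‖T' c‖ = ‖T c‖ := by
    intro c
    have h1 := key c c
    rw [@norm_eq_sqrt_re_inner ℂ, @norm_eq_sqrt_re_inner ℂ, h1]
  have hker : LinearMap.ker T ≤ LinearMap.ker T' := by
    intro c hc
    rw [LinearMap.mem_ker] at hc ⊢
    have := hnorm c
    rw [hc, norm_zero] at this
    exact norm_eq_zero.mp this
  let L₀ : LinearMap.range T →ₗ[ℂ] EuclideanSpace ℂ (Fin n) :=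
    ((LinearMap.ker T).liftQ T' hker) ∘ₗ T.quotKerEquivRange.symm.toLinearMap
  have hL₀ : ∀ c : P → ℂ, L₀ ⟨T c, LinearMap.mem_range_self T c⟩ = T' c := by
    intro c
    simp only [L₀, LinearMap.coe_comp, Function.comp_apply, LinearEquiv.coe_coe,
      LinearMap.quotKerEquivRange_symm_apply_image, Submodule.mkQ_apply, Submodule.liftQ_apply]
  have hLnorm : ∀ s : LinearMap.range T, ‖L₀ s‖ = ‖s‖ := by
    rintro ⟨s, hs⟩
    obtain ⟨c, rfl⟩ := hs
    have : (⟨T c, ⟨c, rfl⟩⟩ : LinearMap.range T) = ⟨T c, LinearMap.mem_range_self T c⟩ := rfl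
    rw [this, hL₀, hnorm]
    rfl
  let L : LinearMap.range T →ₗᵢ[ℂ] EuclideanSpace ℂ (Fin n) := ⟨L₀, hLnorm⟩
  refine ⟨L.extend, fun p => ?_⟩
  have hx : T (Pi.single p 1) = x p := by
    simp [hT, Fintype.linearCombination_apply, Pi.single_apply]
  have hy : T' (Pi.single p 1) = y p := by
    simp [hT', Fintype.linearCombination_apply, Pi.single_apply]
  have hmem : x p ∈ LinearMap.range T := ⟨Pi.single p 1, hx⟩
  have := LinearIsometry.extend_apply L ⟨x p, hmem⟩
  rw [this]
  show L₀ ⟨x p, hmem⟩ = y p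
  have : (⟨x p, hmem⟩ : LinearMap.range T) = ⟨T (Pi.single p 1), LinearMap.mem_range_self _ _⟩ :=
    Subtype.ext hx.symm
  rw [this, hL₀, hy]

end

theorem simultaneous_unitary_equivalence (m n k : ℕ)
    (A B : Fin k → Matrix (Fin m) (Fin n) ℂ)
    (U : Matrix (Fin m) (Fin m) ℂ) (hU : U * Uᴴ = 1)
    (h : ∀ i j, U * (A i * (A j)ᴴ) * Uᴴ = B i * (B j)ᴴ) :
    ∃ V : Matrix (Fin n) (Fin n) ℂ, V * Vᴴ = 1 ∧ ∀ i, U * A i = B i * V := by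
  classical
  -- the rows of the matrices `U * A i` and `B i`, as vectors in `ℂⁿ`
  set x : (Fin k × Fin m) → EuclideanSpace ℂ (Fin n) :=
    fun p => (WithLp.equiv 2 (Fin n → ℂ)).symm ((U * A p.1) p.2) with hx
  set y : (Fin k × Fin m) → EuclideanSpace ℂ (Fin n) :=
    fun p => (WithLp.equiv 2 (Fin n → ℂ)).symm ((B p.1) p.2) with hy
  have hgram : ∀ p q, (inner ℂ (x p) (x q) : ℂ) = inner ℂ (y p) (y q) := by
    intro p q
    have h1 : (U * (A q.1 * (A p.1)ᴴ) * Uᴴ) q.2 p.2 = (B q.1 * (B p.1)ᴴ) q.2 p.2 := by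
      rw [h]
    have h2 : U * (A q.1 * (A p.1)ᴴ) * Uᴴ = (U * A q.1) * (U * A p.1)ᴴ := by
      rw [conjTranspose_mul]
      simp only [Matrix.mul_assoc]
    rw [h2] at h1
    simpa [PiLp.inner_apply, hx, hy, Matrix.mul_apply, conjTranspose_apply,
      mul_comm, RCLike.inner_apply] using h1
  obtain ⟨W, hW⟩ := gram_exists_isometry x y hgram
  -- the matrix of `W` in the standard basis
  set M : Matrix (Fin n) (Fin n) ℂ :=
    Matrix.of (fun r s => W ((EuclideanSpace.single s 1)) r) with hM
  have hMv : ∀ v : EuclideanSpace ℂ (Fin n), M *ᵥ (WithLp.equiv 2 (Fin n → ℂ)) v = W v := by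
    intro v
    have hv : ∑ s, v s • EuclideanSpace.single s (1 : ℂ) = v := by
      have := (EuclideanSpace.basisFun (Fin n) ℂ).sum_repr v
      simpa using this
    funext r
    conv_rhs => rw [← hv]
    rw [map_sum]
    simp only [_root_.map_smul]
    have hsum : (∑ s, v s • W (EuclideanSpace.single s 1)) r
        = ∑ s, v s * W (EuclideanSpace.single s 1) r := by
      have h4 := Finset.sum_apply r Finset.univ
        (fun s => v s • (W (EuclideanSpace.single s 1) : Fin n → ℂ))
      simp only [smul_eq_mul] at h4
      rw [WithLp.ofLp_sum]
      simpa using h4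
    rw [hsum]
    simp [Matrix.mulVec, dotProduct, hM, mul_comm]
  have hMunit : Mᴴ * M = 1 := by
    ext s t
    have h1 := W.inner_map_map (EuclideanSpace.single s (1 : ℂ)) (EuclideanSpace.single t 1)
    rw [EuclideanSpace.inner_single_left] at h1
    simp only [_root_.map_one, one_mul, EuclideanSpace.single_apply] at h1
    rw [PiLp.inner_apply] at h1
    simp only [RCLike.inner_apply] at h1
    simp only [Matrix.mul_apply, conjTranspose_apply, hM, Matrix.of_apply, Matrix.one_apply,
      RCLike.star_def]
    rw [← h1]
    exact Finset.sum_congr rfl fun j _ => mul_comm _ _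
  have hMunit' : M * Mᴴ = 1 := mul_eq_one_comm.mp hMunit
  have hB : ∀ i, B i = (U * A i) * Mᵀ := by
    intro i
    ext r t
    have h2 := hMv (x ⟨i, r⟩)
    rw [hW ⟨i, r⟩] at h2
    have h3 := congrFun h2 t
    simp only [hx, hy, WithLp.equiv_symm_apply, PiLp.toLp_apply, Equiv.apply_symm_apply, Matrix.mulVec, dotProduct] at h3
    simp only [Matrix.mul_apply, Matrix.transpose_apply]
    rw [← h3]
    exact Finset.sum_congr rfl fun j _ => mul_comm _ _
  refine ⟨(Mᴴ)ᵀ, ?_, fun i => ?_⟩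
  · have hc : ((Mᴴ)ᵀ)ᴴ = Mᵀ := by
      ext a b
      simp [Matrix.conjTranspose_apply, Matrix.transpose_apply]
    rw [hc, ← Matrix.transpose_mul, hMunit', Matrix.transpose_one]
  · rw [hB i, Matrix.mul_assoc, ← Matrix.transpose_mul, hMunit, Matrix.transpose_one,
      Matrix.mul_one]
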